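/- Let c ∈ ℝ, let I ⊆ ℝ be a nonempty open interval, and let φ : ℝ → ℝ be three times continuously differentiable on I, satisfying the traveling-wave equation −c·φ'(ξ) + c·φ'''(ξ) = φ(ξ)·φ'''(ξ) + 2φ'(ξ)·φ''(ξ) − 3φ(ξ)²·φ'(ξ) for all ξ ∈ I. Then there exist constants a, d ∈ ℝ such that for all ξ ∈ I: (φ'(ξ))²·(c − φ(ξ)) = φ(ξ)²·(c − φ(ξ)²/2) + a·φ(ξ) + d. -/

import Mathlib

open Set

private lemma const_of_hasDerivAt_zero {I : Set ℝ} (hIopen : IsOpen I)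
    (hIconv : Convex ℝ I) {f : ℝ → ℝ}
    (hf : ∀ ξ ∈ I, HasDerivAt f 0 ξ) {x y : ℝ} (hx : x ∈ I) (hy : y ∈ I) :
    f x = f y := by
  refine hIconv.is_const_of_fderivWithin_eq_zero
    (fun ξ hξ => ((hf ξ hξ).differentiableAt).differentiableWithinAt) (fun ξ hξ => ?_) hx hy
  rw [(hf ξ hξ).hasFDerivAt.hasFDerivWithinAt.fderivWithin (hIopen.uniqueDiffOn ξ hξ)]
  ext
  simp

/-- First integral of the traveling-wave ODE for the mCH equation: a `C³` solution of
`-cφ' + cφ''' = φφ''' + 2φ'φ'' - 3φ²φ'` on a nonempty open interval `I` satisfies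
`(φ')²(c - φ) = φ²(c - φ²/2) + aφ + d` on `I` for some constants `a, d`. -/
theorem mCH_first_integral (c : ℝ) (I : Set ℝ) (hIopen : IsOpen I)
    (hIne : I.Nonempty) (hIconn : I.OrdConnected) (φ : ℝ → ℝ)
    (hφ : ContDiffOn ℝ 3 φ I)
    (hode : ∀ ξ ∈ I,
      -c * deriv φ ξ + c * iteratedDeriv 3 φ ξ =
        φ ξ * iteratedDeriv 3 φ ξ + 2 * deriv φ ξ * iteratedDeriv 2 φ ξ
          - 3 * (φ ξ) ^ 2 * deriv φ ξ) :
    ∃ a d : ℝ, ∀ ξ ∈ I,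
      (deriv φ ξ) ^ 2 * (c - φ ξ) =
        (φ ξ) ^ 2 * (c - (φ ξ) ^ 2 / 2) + a * φ ξ + d := by
  obtain ⟨ξ₀, hξ₀⟩ := hIne
  have hIconv : Convex ℝ I := hIconn.convex
  set φ' := deriv φ with hφ'
  set φ'' := deriv φ' with hφ''
  set φ''' := deriv φ'' with hφ'''
  have hφ1 : ContDiffOn ℝ 2 φ' I := hφ.deriv_of_isOpen hIopen (by norm_num)
  have hφ2 : ContDiffOn ℝ 1 φ'' I := hφ1.deriv_of_isOpen hIopen (by norm_num)
  have hD : ∀ ξ ∈ I, HasDerivAt φ (φ' ξ) ξ := fun ξ hξ =>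
    ((hφ.differentiableOn (by norm_num)).differentiableAt (hIopen.mem_nhds hξ)).hasDerivAt
  have hD1 : ∀ ξ ∈ I, HasDerivAt φ' (φ'' ξ) ξ := fun ξ hξ =>
    ((hφ1.differentiableOn (by norm_num)).differentiableAt (hIopen.mem_nhds hξ)).hasDerivAt
  have hD2 : ∀ ξ ∈ I, HasDerivAt φ'' (φ''' ξ) ξ := fun ξ hξ =>
    ((hφ2.differentiableOn (by norm_num)).differentiableAt (hIopen.mem_nhds hξ)).hasDerivAt
  have h2 : iteratedDeriv 2 φ = φ'' := by
    simp [iteratedDeriv_succ, iteratedDeriv_one, hφ'', hφ']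
  have h3 : iteratedDeriv 3 φ = φ''' := by
    simp [iteratedDeriv_succ, iteratedDeriv_one, hφ''', hφ'', hφ']
  have hode' : ∀ ξ ∈ I,
      -c * φ' ξ + c * φ''' ξ =
        φ ξ * φ''' ξ + 2 * φ' ξ * φ'' ξ - 3 * (φ ξ) ^ 2 * φ' ξ := by
    intro ξ hξ
    have := hode ξ hξ
    rwa [h2, h3] at this
  -- First integral
  set F : ℝ → ℝ := fun ξ => c * φ'' ξ - c * φ ξ - φ ξ * φ'' ξ - (φ' ξ) ^ 2 / 2 + (φ ξ) ^ 3
    with hF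
  have hFd : ∀ ξ ∈ I, HasDerivAt F 0 ξ := by
    intro ξ hξ
    have h := ((((((hD2 ξ hξ).const_mul c).sub ((hD ξ hξ).const_mul c)).sub
      ((hD ξ hξ).mul (hD2 ξ hξ))).sub
      (((hD1 ξ hξ).pow 2).div_const 2)).add ((hD ξ hξ).pow 3))
    convert h using 1
    case e'_4 => rfl
    case e'_5 => rfl
    case e'_8 => rfl
    have := hode' ξ hξ
    push_cast
    nlinarith [this]
  set a₀ : ℝ := F ξ₀ with ha₀
  have hFc : ∀ ξ ∈ I, F ξ = a₀ := fun ξ hξ =>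
    const_of_hasDerivAt_zero hIopen hIconv hFd hξ hξ₀
  -- Second integral
  set G : ℝ → ℝ := fun ξ =>
    (φ' ξ) ^ 2 * (c - φ ξ) - (φ ξ) ^ 2 * (c - (φ ξ) ^ 2 / 2) - 2 * a₀ * φ ξ with hG
  have hGd : ∀ ξ ∈ I, HasDerivAt G 0 ξ := by
    intro ξ hξ
    have h := ((((hD1 ξ hξ).pow 2).mul ((hasDerivAt_const ξ c).sub (hD ξ hξ))).sub
      (((hD ξ hξ).pow 2).mul ((hasDerivAt_const ξ c).sub
        (((hD ξ hξ).pow 2).div_const 2)))).sub ((hD ξ hξ).const_mul (2 * a₀))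
    convert h using 1
    case e'_4 => rfl
    case e'_5 => rfl
    case e'_8 => rfl
    have hFξ := hFc ξ hξ
    simp only [hF] at hFξ
    push_cast
    rw [← hFξ]
    simp only [Pi.sub_apply, Pi.pow_apply]
    ring
  set d₀ : ℝ := G ξ₀ with hd₀
  refine ⟨2 * a₀, d₀, fun ξ hξ => ?_⟩
  have hGc : G ξ = d₀ := const_of_hasDerivAt_zero hIopen hIconv hGd hξ hξ₀
  simp only [hG] at hGc
  linarith [hGc]
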